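/- Let ε = e^{2πi/3}. For positive integers l_{n+1},...,l_m and reals λ_i ∈ (0,1), the ℓ¹-coefficient norm of the real polynomial ∏_{i=n+1}^{m} (1/(1+λ_i) + ε·λ_i/(1+λ_i)·X_i)^{l_i}·(1/(1+λ_i) + ε̄·λ_i/(1+λ_i)·X_i)^{l_i} equals ∏_{i=n+1}^{m} (1 − λ_i/(1+λ_i)²)^{l_i}; in particular it is at most ∏_{i=n+1}^{m} (1 − λ_i/(1+λ_i)²)^{l_i}. -/

import Mathlib

open Finset MvPolynomial

noncomputable def eps : ℂ := Complex.exp (2 * Real.pi * Complex.I / 3)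

/-- The product `∏_{i=n+1}^m (1/(1+λᵢ) + ε λᵢ Xᵢ/(1+λᵢ))^{lᵢ} (1/(1+λᵢ) + ε̄ λᵢ Xᵢ/(1+λᵢ))^{lᵢ}`. -/
noncomputable def conjProd (n m : ℕ) (lam : ℕ → ℝ) (l : ℕ → ℕ) : MvPolynomial ℕ ℂ :=
  ∏ i ∈ Finset.Ioc n m,
    ((C ((1 : ℂ) / (1 + (lam i : ℂ))) + C (eps * (lam i : ℂ) / (1 + (lam i : ℂ))) * X i) ^ l i *
     (C ((1 : ℂ) / (1 + (lam i : ℂ))) +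
       C ((starRingEnd ℂ) eps * (lam i : ℂ) / (1 + (lam i : ℂ))) * X i) ^ l i)

/-! ### Auxiliary lemmas -/

lemma coeff_aeval_negX (p : MvPolynomial ℕ ℝ) (s : ℕ →₀ ℕ) :
    coeff s (aeval (fun i => - X i : ℕ → MvPolynomial ℕ ℝ) p)
      = (-1 : ℝ) ^ (s.sum fun _ k => k) * coeff s p := by
  induction p using MvPolynomial.induction_on generalizing s with
  | C a =>
    rw [aeval_C, MvPolynomial.algebraMap_eq, coeff_C]
    split_ifs with h
    · subst h; simp
    · simp
  | add p q hp hq =>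
    simp only [map_add, coeff_add, hp, hq]; ring
  | mul_X p i hp =>
    rw [map_mul, aeval_X, mul_neg, coeff_neg, coeff_mul_X', coeff_mul_X']
    split_ifs with h
    · have hsi : s i ≠ 0 := Finsupp.mem_support_iff.mp h
      have hrec : s - Finsupp.single i 1 + Finsupp.single i 1 = s := by
        ext j
        simp only [Finsupp.add_apply, Finsupp.tsub_apply, Finsupp.single_apply]
        by_cases hj : i = j
        · subst hj; simp; omega
        · simp [hj]
      have hd : (s.sum fun _ k => k) = ((s - Finsupp.single i 1).sum fun _ k => k) + 1 := by
        conv_lhs => rw [← hrec]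
        rw [Finsupp.sum_add_index' (fun _ => rfl) (fun _ _ _ => rfl)]
        rw [Finsupp.sum_single_index rfl]
      rw [hp, hd, pow_succ]
      ring
    · ring

lemma coeff_mul_nonneg' {p q : MvPolynomial ℕ ℝ} (hp : ∀ s, 0 ≤ coeff s p)
    (hq : ∀ s, 0 ≤ coeff s q) : ∀ s, 0 ≤ coeff s (p * q) := fun s => by
  rw [coeff_mul]
  exact Finset.sum_nonneg fun x _ => mul_nonneg (hp _) (hq _)

lemma coeff_one_nonneg : ∀ s, 0 ≤ coeff s (1 : MvPolynomial ℕ ℝ) := fun s => by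
  rw [← C_1, coeff_C]; split_ifs <;> norm_num

lemma coeff_pow_nonneg {p : MvPolynomial ℕ ℝ} (hp : ∀ s, 0 ≤ coeff s p) (n : ℕ) :
    ∀ s, 0 ≤ coeff s (p ^ n) := by
  induction n with
  | zero => simpa using coeff_one_nonneg
  | succ k ih => rw [pow_succ]; exact coeff_mul_nonneg' ih hp

lemma coeff_prod_nonneg {t : Finset ℕ} {f : ℕ → MvPolynomial ℕ ℝ}
    (h : ∀ i ∈ t, ∀ s, 0 ≤ coeff s (f i)) : ∀ s, 0 ≤ coeff s (∏ i ∈ t, f i) := by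
  classical
  induction t using Finset.induction_on with
  | empty => simpa using coeff_one_nonneg
  | insert _ _ hni ih =>
    rename_i a t'
    rw [Finset.prod_insert hni]
    exact coeff_mul_nonneg' (h a (Finset.mem_insert_self a t'))
      (ih fun i hi s => h i (Finset.mem_insert_of_mem hi) s)

lemma coeff_factor_nonneg {a b c : ℝ} (ha : 0 ≤ a) (hb : 0 ≤ b) (hc : 0 ≤ c) (i : ℕ) :
    ∀ s, 0 ≤ coeff s (C a + C b * X i + C c * X i ^ 2 : MvPolynomial ℕ ℝ) := fun s => by
  rw [coeff_add, coeff_add, coeff_C, X_pow_eq_monomial, coeff_C_mul, coeff_C_mul,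
    coeff_monomial, coeff_X']
  split_ifs <;> simp_all <;> positivity

noncomputable def Ppoly (n m : ℕ) (lam : ℕ → ℝ) (l : ℕ → ℕ) : MvPolynomial ℕ ℝ :=
  ∏ i ∈ Finset.Ioc n m,
    (C (1 / (1 + lam i) ^ 2) + C (-(lam i) / (1 + lam i) ^ 2) * X i +
      C ((lam i) ^ 2 / (1 + lam i) ^ 2) * X i ^ 2) ^ l i

noncomputable def Qpoly (n m : ℕ) (lam : ℕ → ℝ) (l : ℕ → ℕ) : MvPolynomial ℕ ℝ :=
  ∏ i ∈ Finset.Ioc n m,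
    (C (1 / (1 + lam i) ^ 2) + C ((lam i) / (1 + lam i) ^ 2) * X i +
      C ((lam i) ^ 2 / (1 + lam i) ^ 2) * X i ^ 2) ^ l i

lemma aeval_negX_Q (n m : ℕ) (lam : ℕ → ℝ) (l : ℕ → ℕ) :
    aeval (fun i => - X i : ℕ → MvPolynomial ℕ ℝ) (Qpoly n m lam l) = Ppoly n m lam l := by
  rw [Qpoly, Ppoly, map_prod]
  refine Finset.prod_congr rfl fun i _ => ?_
  rw [map_pow]
  congr 1
  simp only [map_add, map_mul, map_pow, aeval_C, aeval_X, MvPolynomial.algebraMap_eq, map_neg,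
    map_div₀]
  rw [neg_div, C_neg]
  ring

lemma eps_eq : eps = ((-1/2 : ℝ) : ℂ) + ((Real.sqrt 3 / 2 : ℝ) : ℂ) * Complex.I := by
  have h : (2 * Real.pi * Complex.I / 3) = ((2 * Real.pi / 3 : ℝ) : ℂ) * Complex.I := by
    push_cast; ring
  rw [eps, h, Complex.exp_mul_I, ← Complex.ofReal_cos, ← Complex.ofReal_sin]
  have h1 : (2 * Real.pi / 3) = Real.pi - Real.pi/3 := by ring
  rw [h1, Real.cos_pi_sub, Real.sin_pi_sub, Real.cos_pi_div_three, Real.sin_pi_div_three]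
  norm_num

lemma eps_conj : (starRingEnd ℂ) eps = ((-1/2 : ℝ) : ℂ) - ((Real.sqrt 3 / 2 : ℝ) : ℂ) * Complex.I := by
  rw [eps_eq]
  simp [Complex.conj_ofReal, sub_eq_add_neg, map_add, map_mul, Complex.conj_I, map_ofNat]

lemma eps_add_conj : eps + (starRingEnd ℂ) eps = -1 := by
  rw [eps_conj, eps_eq]; push_cast; ring

lemma eps_mul_conj : eps * (starRingEnd ℂ) eps = 1 := by
  rw [eps_conj, eps_eq]
  have h3 : ((Real.sqrt 3 : ℝ) : ℂ) ^ 2 = 3 := by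
    rw [← Complex.ofReal_pow, Real.sq_sqrt (by norm_num)]; norm_num
  have hI : Complex.I ^ 2 = -1 := Complex.I_sq
  push_cast
  linear_combination (-Complex.I^2/4) * h3 + (-3/4) * hI

lemma conjProd_eq_map (n m : ℕ) (lam : ℕ → ℝ) (l : ℕ → ℕ) (hlam : ∀ i, 0 < lam i) :
    conjProd n m lam l = map (algebraMap ℝ ℂ) (Ppoly n m lam l) := by
  rw [conjProd, Ppoly, map_prod]
  refine Finset.prod_congr rfl fun i _ => ?_
  rw [map_pow, ← mul_pow]
  congr 1
  have ht : ((1 : ℂ) + (lam i : ℂ)) ≠ 0 := by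
    have : ((1 : ℂ) + (lam i : ℂ)) = ((1 + lam i : ℝ) : ℂ) := by push_cast; ring
    rw [this, Complex.ofReal_ne_zero]
    nlinarith [hlam i]
  set t : ℂ := (lam i : ℂ) with htdef
  have e1 : ((algebraMap ℝ ℂ) (1 / (1 + lam i) ^ 2)) = (1/(1+t)) * (1/(1+t)) := by
    rw [Complex.coe_algebraMap]
    push_cast
    rw [← htdef]
    field_simp
  have e2 : ((algebraMap ℝ ℂ) (-(lam i) / (1 + lam i) ^ 2))
      = (1/(1+t)) * ((starRingEnd ℂ) eps * t/(1+t)) + (eps * t/(1+t)) * (1/(1+t)) := by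
    rw [Complex.coe_algebraMap]
    push_cast
    rw [← htdef]
    field_simp
    linear_combination (-t) * eps_add_conj
  have e3 : ((algebraMap ℝ ℂ) ((lam i) ^ 2 / (1 + lam i) ^ 2))
      = (eps * t/(1+t)) * ((starRingEnd ℂ) eps * t/(1+t)) := by
    rw [Complex.coe_algebraMap]
    push_cast
    rw [← htdef]
    field_simp
    linear_combination (-t^2) * eps_mul_conj
  have factor_expand : ∀ (A V W : ℂ),
      (C A + C V * X i) * (C A + C W * X i)
        = C (A*A) + C (A*W + V*A) * X i + C (V*W) * X i ^ 2 := by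
    intro A V W
    rw [C_mul, C_add, C_mul, C_mul, C_mul]
    ring
  simp only [map_add, map_mul, map_pow, MvPolynomial.map_C, MvPolynomial.map_X]
  rw [e1, e2, e3, factor_expand]

lemma eval_one_Q (n m : ℕ) (lam : ℕ → ℝ) (l : ℕ → ℕ) (hlam : ∀ i, 0 < lam i) :
    eval (fun _ => (1:ℝ)) (Qpoly n m lam l)
      = ∏ i ∈ Finset.Ioc n m, (1 - lam i / (1 + lam i) ^ 2) ^ l i := by
  rw [Qpoly, map_prod]
  refine Finset.prod_congr rfl fun i _ => ?_
  rw [map_pow]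
  congr 1
  have h : (1:ℝ) + lam i ≠ 0 := by nlinarith [hlam i]
  simp only [map_add, map_mul, map_pow, eval_C, eval_X, one_pow, mul_one]
  field_simp
  ring

theorem l1_norm_of_conjugate_product
    (n m : ℕ) (lam : ℕ → ℝ) (l : ℕ → ℕ)
    (hlam : ∀ i, 0 < lam i ∧ lam i < 1) (hl : ∀ i, 1 ≤ l i) :
    (∑ s ∈ (conjProd n m lam l).support, ‖(conjProd n m lam l).coeff s‖)
      = ∏ i ∈ Finset.Ioc n m, (1 - lam i / (1 + lam i) ^ 2) ^ l i ∧
    (∑ s ∈ (conjProd n m lam l).support, ‖(conjProd n m lam l).coeff s‖)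
      ≤ ∏ i ∈ Finset.Ioc n m, (1 - lam i / (1 + lam i) ^ 2) ^ l i := by
  have hpos : ∀ i, 0 < lam i := fun i => (hlam i).1
  have hmap := conjProd_eq_map n m lam l hpos
  have hinj : Function.Injective (algebraMap ℝ ℂ) := fun a b hab => by
    simpa using congrArg Complex.re hab
  have hsgn : ∀ s, coeff s (Ppoly n m lam l)
      = (-1 : ℝ) ^ (s.sum fun _ k => k) * coeff s (Qpoly n m lam l) := fun s => by
    rw [← aeval_negX_Q n m lam l]
    exact coeff_aeval_negX _ s
  have hQnonneg : ∀ s, 0 ≤ coeff s (Qpoly n m lam l) := by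
    refine coeff_prod_nonneg fun i _ => coeff_pow_nonneg (coeff_factor_nonneg ?_ ?_ ?_ i) (l i)
    · positivity
    · have := hpos i; positivity
    · positivity
  have hsupp1 : (conjProd n m lam l).support = (Ppoly n m lam l).support := by
    rw [hmap]; exact support_map_of_injective _ hinj
  have hsupp2 : (Ppoly n m lam l).support = (Qpoly n m lam l).support := by
    ext s
    simp only [mem_support_iff, hsgn]
    constructor
    · intro h h'; exact h (by rw [h', mul_zero])
    · intro h h'
      exact h ((mul_eq_zero.mp h').resolve_left (pow_ne_zero _ (by norm_num)))
  have habs : ∀ s, ‖(conjProd n m lam l).coeff s‖ = coeff s (Qpoly n m lam l) := by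
    intro s
    rw [hmap, coeff_map, Complex.coe_algebraMap, Complex.norm_real, Real.norm_eq_abs, hsgn, abs_mul, abs_pow,
      abs_neg, abs_one, one_pow, one_mul, abs_of_nonneg (hQnonneg s)]
  have key : (∑ s ∈ (conjProd n m lam l).support, ‖(conjProd n m lam l).coeff s‖)
      = ∏ i ∈ Finset.Ioc n m, (1 - lam i / (1 + lam i) ^ 2) ^ l i := by
    calc (∑ s ∈ (conjProd n m lam l).support, ‖(conjProd n m lam l).coeff s‖)
        = ∑ s ∈ (Qpoly n m lam l).support, coeff s (Qpoly n m lam l) := by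
          rw [hsupp1, hsupp2]
          exact Finset.sum_congr rfl fun s _ => habs s
      _ = eval (fun _ => (1:ℝ)) (Qpoly n m lam l) := by
          rw [eval_eq]
          exact Finset.sum_congr rfl fun s _ => by simp
      _ = ∏ i ∈ Finset.Ioc n m, (1 - lam i / (1 + lam i) ^ 2) ^ l i :=
          eval_one_Q n m lam l hpos
  exact ⟨key, key.le⟩
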